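/- Let G be a graph with partial precoloring p and let H be a set of vertices of G. If there exists a full coloring c extending p such that every vertex of H is happy with respect to c, then there is no path u₁, …, u_t in G with u₁ and u_t precolored by p, p(u₁) ≠ p(u_t), and for each i ∈ [t−1] at least one of u_i, u_{i+1} in H. -/
import Mathlib


/-- If some coloring extending p makes all of H happy, then there is no path between
differently precolored vertices whose every edge has an endpoint in H. -/
theorem stmt_2 {V : Type*} (G : SimpleGraph V) (p : V → Option ℕ) (H : Set V)
    (h : ∃ c : V → ℕ, (∀ v a, p v = some a → c v = a) ∧
      ∀ v ∈ H, ∀ w, G.Adj v w → c w = c v) :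
    ¬ ∃ (t : ℕ) (u : Fin (t + 1) → V) (a b : ℕ),
      (∀ i : Fin t, G.Adj (u i.castSucc) (u i.succ)) ∧
      p (u 0) = some a ∧ p (u (Fin.last t)) = some b ∧ a ≠ b ∧
      (∀ i : Fin t, u i.castSucc ∈ H ∨ u i.succ ∈ H) := by
  rintro ⟨t, u, a, b, hadj, ha, hb, hab, hH⟩
  obtain ⟨c, hext, hhappy⟩ := h
  have key : ∀ i : Fin (t + 1), c (u i) = c (u 0) := by
    intro i
    induction i using Fin.induction with
    | zero => rfl
    | succ j ih =>
      have : c (u j.succ) = c (u j.castSucc) := by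
        rcases hH j with hj | hj
        · exact hhappy _ hj _ (hadj j)
        · exact (hhappy _ hj _ (hadj j).symm).symm
      rw [this]; exact ih
  have h1 : c (u 0) = a := hext _ _ ha
  have h2 : c (u (Fin.last t)) = b := hext _ _ hb
  exact hab (h1 ▸ h2 ▸ (key (Fin.last t)).symm)
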